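/- Let N be a positive integer and let v, w be positive integers. Then there exists γ ∈ Γ₀(N) with γ·(1, w)ᵀ = (1, v)ᵀ or γ·(1, w)ᵀ = (−1, −v)ᵀ if and only if gcd(v, N) = gcd(w, N) and v/gcd(v,N) ≡ w/gcd(w,N) (mod gcd(gcd(w,N), N/gcd(w,N))). -/

import Mathlib

open Matrix

private lemma gcd_eq_of_dvd_sub {x y n : ℤ} (h : n ∣ x - y) : Int.gcd x n = Int.gcd y n := by
  have key : ∀ a b : ℤ, n ∣ a - b → Int.gcd a n ∣ Int.gcd b n := by
    intro a b hab
    rw [← Int.natCast_dvd_natCast]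
    apply Int.dvd_coe_gcd ?_ (Int.gcd_dvd_right _ _)
    have h1 : (↑(Int.gcd a n) : ℤ) ∣ a := Int.gcd_dvd_left _ _
    have h2 : (↑(Int.gcd a n) : ℤ) ∣ a - b := dvd_trans (Int.gcd_dvd_right _ _) hab
    simpa using dvd_sub h1 h2
  exact Nat.dvd_antisymm (key _ _ h) (key _ _ (by simpa using h.neg_right))

theorem stmt_7 (N v w : ℕ) (hN : 0 < N) (hv : 0 < v) (hw : 0 < w) :
    (∃ γ : Matrix (Fin 2) (Fin 2) ℤ, γ.det = 1 ∧ (N : ℤ) ∣ γ 1 0 ∧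
        ((γ 0 0 + γ 0 1 * w = 1 ∧ γ 1 0 + γ 1 1 * w = v) ∨
          (γ 0 0 + γ 0 1 * w = -1 ∧ γ 1 0 + γ 1 1 * w = -(v : ℤ)))) ↔
      (Nat.gcd v N = Nat.gcd w N ∧
        v / Nat.gcd v N ≡ w / Nat.gcd w N [MOD Nat.gcd (Nat.gcd w N) (N / Nat.gcd w N)]) := by
  set d0 := Nat.gcd w N with hd0
  have hd0pos : 0 < d0 := Nat.gcd_pos_of_pos_right _ hN
  have hwd : d0 ∣ w := Nat.gcd_dvd_left _ _
  have hNd : d0 ∣ N := Nat.gcd_dvd_right _ _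
  set N' := N / d0 with hN'
  set w' := w / d0 with hw'
  set m := Nat.gcd d0 N' with hm
  have hNz : (N : ℤ) = (d0 : ℤ) * N' := by
    exact_mod_cast (Nat.mul_div_cancel' hNd).symm
  have hwz : (w : ℤ) = (d0 : ℤ) * w' := by
    exact_mod_cast (Nat.mul_div_cancel' hwd).symm
  have hmN' : (m : ℤ) ∣ (N' : ℤ) := Int.natCast_dvd_natCast.mpr (Nat.gcd_dvd_right _ _)
  have hmd0 : (m : ℤ) ∣ (d0 : ℤ) := Int.natCast_dvd_natCast.mpr (Nat.gcd_dvd_left _ _)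
  have hmN : (m : ℤ) ∣ (N : ℤ) := by rw [hNz]; exact hmd0.mul_right _
  constructor
  · rintro ⟨γ, hdet, hNc, h⟩
    rw [Matrix.det_fin_two] at hdet
    set a := γ 0 0 with ha; set b := γ 0 1 with hb
    set c := γ 1 0 with hc; set d := γ 1 1 with hd
    obtain ⟨k, hk⟩ := hNc
    obtain ⟨ε, hε, h1, h2⟩ : ∃ ε : ℤ, (ε = 1 ∨ ε = -1) ∧ a + b * w = ε ∧ c + d * w = ε * v := by
      rcases h with ⟨h1, h2⟩ | ⟨h1, h2⟩
      · exact ⟨1, Or.inl rfl, h1, by rw [one_mul]; exact h2⟩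
      · exact ⟨-1, Or.inr rfl, h1, by rw [neg_one_mul, ← h2]⟩
    have hε2 : ε * ε = 1 := by rcases hε with rfl | rfl <;> norm_num
    have hεabs : ε.natAbs = 1 := by rcases hε with rfl | rfl <;> rfl
    have hvz : (v : ℤ) = ε * c + ε * d * w := by
      linear_combination (-ε) * h2 - (v : ℤ) * hε2
    have hcop : IsCoprime (d : ℤ) (N : ℤ) :=
      ⟨a, -b * k, by linear_combination hdet + b * hk⟩
    have hdN : Int.gcd d (N : ℤ) = 1 := Int.isCoprime_iff_gcd_eq_one.mp hcop
    have hgcd : Nat.gcd v N = d0 := by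
      have h3 : (N : ℤ) ∣ (v : ℤ) - ε * d * w := ⟨ε * k, by linear_combination hvz + ε * hk⟩
      have h4 : Int.gcd (v : ℤ) (N : ℤ) = Int.gcd (ε * d * w) (N : ℤ) :=
        gcd_eq_of_dvd_sub h3
      have h5 : Int.gcd (ε * d * w) (N : ℤ) = Nat.gcd (d.natAbs * w) N := by
        simp [Int.gcd, Int.natAbs_mul, hεabs]
      have h6 : Nat.Coprime d.natAbs N := hdN
      rw [Int.gcd_natCast_natCast] at h4
      rw [h4, h5, h6.gcd_mul_left_cancel]
    refine ⟨hgcd, ?_⟩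
    have hvd : d0 ∣ v := hgcd ▸ Nat.gcd_dvd_left _ _
    set v' := v / d0 with hv'
    have hvz' : (v : ℤ) = (d0 : ℤ) * v' := by
      exact_mod_cast (Nat.mul_div_cancel' hvd).symm
    rw [hgcd, Nat.modEq_iff_dvd]
    -- goal : (m:ℤ) ∣ w' - v'
    have hm1 : (m : ℤ) ∣ a * d - 1 := hmN.trans ⟨b * k, by linear_combination hdet + b * hk⟩
    have hm2 : (m : ℤ) ∣ a - ε := hmd0.trans ⟨-b * w', by linear_combination h1 - b * hwz⟩
    have hεd : (m : ℤ) ∣ ε * d - 1 := by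
      have : ε * d - 1 = (a * d - 1) - (a - ε) * d := by ring
      rw [this]; exact dvd_sub hm1 (hm2.mul_right d)
    have hkey : (v' : ℤ) - ε * d * w' - ε * N' * k = 0 := by
      have h7 : (d0 : ℤ) * ((v' : ℤ) - ε * d * w' - ε * N' * k) = 0 := by
        linear_combination hvz - hvz' + ε * hk + ε * d * hwz + ε * k * hNz
      rcases mul_eq_zero.mp h7 with h | h
      · exact absurd h (by exact_mod_cast hd0pos.ne')
      · exact h
    have : (w' : ℤ) - v' = (ε * d - 1) * (-w') + (N' : ℤ) * (-(ε * k)) := by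
      linear_combination -hkey
    rw [this]
    exact dvd_add (hεd.mul_right _) (hmN'.mul_right _)
  · rintro ⟨hg, hmod⟩
    have hvd : d0 ∣ v := hg ▸ Nat.gcd_dvd_left _ _
    set v' := v / d0 with hv'
    have hvz : (v : ℤ) = (d0 : ℤ) * v' := by
      exact_mod_cast (Nat.mul_div_cancel' hvd).symm
    rw [hg] at hmod
    have hm_sub : (m : ℤ) ∣ (w' : ℤ) - v' := Nat.modEq_iff_dvd.mp hmod
    have cop_w : Nat.Coprime w' N' := by
      have : d0 * Nat.gcd w' N' = d0 * 1 := by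
        rw [mul_one, ← Nat.gcd_mul_left, Nat.mul_div_cancel' hwd, Nat.mul_div_cancel' hNd]
      exact Nat.eq_of_mul_eq_mul_left hd0pos this
    have cop_v : Nat.Coprime v' N' := by
      have : d0 * Nat.gcd v' N' = d0 * 1 := by
        rw [mul_one, ← Nat.gcd_mul_left, Nat.mul_div_cancel' hvd, Nat.mul_div_cancel' hNd, hg]
      exact Nat.eq_of_mul_eq_mul_left hd0pos this
    have hcw : IsCoprime (w' : ℤ) (N' : ℤ) := by
      rw [Int.isCoprime_iff_gcd_eq_one, Int.gcd_natCast_natCast]; exact cop_w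
    obtain ⟨t, s, hts⟩ := hcw
    -- hts : t * w' + s * N' = 1
    have hgm : Int.gcd (v : ℤ) (N' : ℤ) = m := by
      rw [Int.gcd_natCast_natCast, hm]
      conv_lhs => rw [← Nat.mul_div_cancel' hvd]
      exact cop_v.gcd_mul_right_cancel d0
    have hcomp : (m : ℤ) ∣ t * v' - 1 := by
      have h1 : (m : ℤ) ∣ t * w' - 1 := hmN'.trans ⟨-s, by linear_combination hts⟩
      have : t * (v' : ℤ) - 1 = (t * w' - 1) - t * ((w' : ℤ) - v') := by ring
      rw [this]; exact dvd_sub h1 (hm_sub.mul_left t)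
    obtain ⟨s2, hs2⟩ := hcomp
    set x := Int.gcdA (v : ℤ) (N' : ℤ) with hx
    set y := Int.gcdB (v : ℤ) (N' : ℤ) with hy
    have hbez : (m : ℤ) = v * x + N' * y := by
      rw [← hgm]; exact Int.gcd_eq_gcd_ab _ _
    set D : ℤ := 1 + v * x * s2 with hD
    have hDr : ∃ e : ℤ, D - t * v' = (N' : ℤ) * e := by
      refine ⟨-y * s2, by linear_combination -hs2 - s2 * hbez⟩
    obtain ⟨e, he⟩ := hDr
    have e1 : (v' : ℤ) - D * w' = (N' : ℤ) * ((v' : ℤ) * s - e * w') := by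
      linear_combination (-(w' : ℤ)) * he - (v' : ℤ) * hts
    have hc1 : (v : ℤ) - D * w = (N : ℤ) * ((v' : ℤ) * s - e * w') := by
      calc (v : ℤ) - D * w = (d0 : ℤ) * ((v' : ℤ) - D * w') := by rw [hvz, hwz]; ring
        _ = (d0 : ℤ) * ((N' : ℤ) * ((v' : ℤ) * s - e * w')) := by rw [e1]
        _ = (N : ℤ) * ((v' : ℤ) * s - e * w') := by rw [hNz]; ring
    refine ⟨!![1 - x * s2 * w, x * s2; (v : ℤ) - D * w, D], ?_, ?_, Or.inl ⟨?_, ?_⟩⟩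
    · rw [Matrix.det_fin_two_of]; linear_combination hD
    · show (N : ℤ) ∣ (v : ℤ) - D * w
      exact ⟨(v' : ℤ) * s - e * w', hc1⟩
    · show (1 - x * s2 * (w : ℤ)) + x * s2 * w = 1
      ring
    · show ((v : ℤ) - D * w) + D * w = (v : ℤ)
      ring
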